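/- Let W be a random n×n Hermitian positive definite complex matrix with E[W] and E[W^{-1}] finite, and let ρ ≥ 1. Then the gap G = E[log₂ det(I + ρW)] + log₂ det(E[(I + ρW)^{-1}]) satisfies G ≤ log₂ det((I + E[W]) · E[W^{-1}]). -/

import Mathlib

open Real MeasureTheory Matrix ComplexOrder


namespace MimoAux
variable {Ω : Type*} [MeasurableSpace Ω] {μ : Measure Ω}
variable {m : Type*} [Fintype m] [DecidableEq m]

set_option linter.unusedSectionVars false


lemma trace_eq_sum_eig {A : Matrix m m ℂ} (hA : A.IsHermitian) :
    A.trace = ∑ i, (hA.eigenvalues i : ℂ) := by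
  conv_lhs => rw [hA.spectral_theorem, Unitary.conjStarAlgAut_apply]
  rw [Matrix.trace_mul_cycle,
    (Matrix.mem_unitaryGroup_iff').mp (hA.eigenvectorUnitary).2, one_mul,
    Matrix.trace_diagonal]
  simp [Function.comp]

lemma det_im_zero {A : Matrix m m ℂ} (hA : A.PosDef) : A.det.im = 0 :=
  ((Complex.lt_def.mp hA.det_pos).2).symm

lemma det_re_pos {A : Matrix m m ℂ} (hA : A.PosDef) : 0 < A.det.re :=
  (Complex.lt_def.mp hA.det_pos).1

lemma det_re_eq_prod {A : Matrix m m ℂ} (hA : A.IsHermitian) :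
    A.det.re = ∏ i, hA.eigenvalues i := by
  rw [hA.det_eq_prod_eigenvalues]
  norm_cast

lemma log_det_le {A : Matrix m m ℂ} (hA : A.PosDef) :
    Real.log A.det.re ≤ A.trace.re - (Fintype.card m) := by
  rw [det_re_eq_prod hA.1]
  have htr : A.trace.re = ∑ i, hA.1.eigenvalues i := by
    rw [trace_eq_sum_eig hA.1]; norm_cast
  have hpos : ∀ i ∈ Finset.univ, hA.1.eigenvalues i ≠ 0 :=
    fun i _ => (hA.eigenvalues_pos i).ne'
  rw [Real.log_prod hpos, htr]
  calc ∑ i, Real.log (hA.1.eigenvalues i)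
      ≤ ∑ i, (hA.1.eigenvalues i - 1) :=
        Finset.sum_le_sum fun i _ => Real.log_le_sub_one_of_pos (hA.eigenvalues_pos i)
    _ = ∑ i, hA.1.eigenvalues i - (Fintype.card m) := by
        rw [Finset.sum_sub_distrib]; simp



lemma one_le_det_re_one_add {P : Matrix m m ℂ} (hP : P.PosSemidef) :
    1 ≤ (1 + P).det.re := by
  have h1 : (1 + P).PosSemidef := Matrix.PosSemidef.add .one hP
  have : (1 + P).det.re = ∏ i, h1.1.eigenvalues i := by
    rw [h1.1.det_eq_prod_eigenvalues]; norm_cast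
  rw [this]
  have h0 : (1:ℝ) = ∏ _i : m, (1:ℝ) := (Finset.prod_const_one).symm
  rw [h0]
  refine Finset.prod_le_prod (fun i _ => zero_le_one) fun i _ => ?_
  rw [h1.1.eigenvalues_eq]
  set v : m → ℂ := ⇑(h1.1.eigenvectorBasis i) with hv
  have hvv : dotProduct (star v) v = 1 := by
    have h2 := (h1.1.eigenvectorBasis.orthonormal).1 i
    have h3 := EuclideanSpace.inner_eq_star_dotProduct (𝕜 := ℂ)
      (h1.1.eigenvectorBasis i) (h1.1.eigenvectorBasis i)
    rw [inner_self_eq_norm_sq_to_K, h2] at h3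
    rw [dotProduct_comm]; simpa using h3.symm
  rw [Matrix.add_mulVec, Matrix.one_mulVec, dotProduct_add, map_add, hvv]
  have := hP.re_dotProduct_nonneg v
  simp only [RCLike.one_re]
  linarith [this]

lemma posdef_conj {A T : Matrix m m ℂ} (hA : A.PosDef) (hT : T.IsHermitian)
    (hTu : IsUnit T.det) : (T * A * T).PosDef := by
  refine Matrix.PosDef.of_dotProduct_mulVec_pos ?_ ?_
  · show (T * A * T)ᴴ = T * A * T
    calc (T * A * T)ᴴ = Tᴴ * Aᴴ * Tᴴ := by
          rw [Matrix.conjTranspose_mul, Matrix.conjTranspose_mul, Matrix.mul_assoc]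
      _ = T * A * T := by rw [hT.eq, hA.1.eq]
  · intro x hx
    have hTx : T *ᵥ x ≠ 0 := by
      intro h
      apply hx
      have : T⁻¹ *ᵥ (T *ᵥ x) = x := by
        rw [Matrix.mulVec_mulVec, Matrix.nonsing_inv_mul _ hTu, Matrix.one_mulVec]
      rw [h, Matrix.mulVec_zero] at this
      exact this.symm
    have key : dotProduct (star x) ((T * A * T) *ᵥ x)
        = dotProduct (star (T *ᵥ x)) (A *ᵥ (T *ᵥ x)) := by
      rw [← Matrix.mulVec_mulVec, ← Matrix.mulVec_mulVec, dotProduct_mulVec,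
        Matrix.star_mulVec, hT.eq]
    rw [key]
    exact hA.dotProduct_mulVec_pos hTx



open scoped MatrixOrder in
lemma sqrt_isUnit_det {A : Matrix m m ℂ} (hA : A.PosDef) : IsUnit (CFC.sqrt A).det := by
  refine isUnit_iff_ne_zero.mpr fun h => ?_
  have hdetS : (CFC.sqrt A).det * (CFC.sqrt A).det = A.det := by
    rw [← Matrix.det_mul, CFC.sqrt_mul_sqrt_self A hA.posSemidef.nonneg]
  rw [h, mul_zero] at hdetS
  exact hA.det_pos.ne' hdetS.symm

open scoped MatrixOrder in
lemma det_mono {A B : Matrix m m ℂ} (hA : A.PosDef) (hB : B.IsHermitian)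
    (hBA : (B - A).PosSemidef) : A.det.re ≤ B.det.re := by
  set S := CFC.sqrt A with hSdef
  have hSH : S.IsHermitian := (CFC.sqrt_nonneg A).posSemidef.1
  have hSS : S * S = A := CFC.sqrt_mul_sqrt_self A hA.posSemidef.nonneg
  have hSu : IsUnit S.det := sqrt_isUnit_det hA
  have hSinvH : S⁻¹.IsHermitian := hSH.inv
  set P := S⁻¹ * (B - A) * S⁻¹ with hPdef
  have hPpsd : P.PosSemidef := by
    have := hBA.conjTranspose_mul_mul_same (B := S⁻¹)
    rwa [hSinvH.eq] at this
  have hid : S⁻¹ * A * S⁻¹ = 1 := by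
    rw [← hSS, ← Matrix.mul_assoc, Matrix.nonsing_inv_mul _ hSu, Matrix.one_mul,
      Matrix.mul_nonsing_inv _ hSu]
  have hone : 1 + P = S⁻¹ * B * S⁻¹ := by
    have hBsplit : B = A + (B - A) := by abel
    rw [hPdef, ← hid]
    conv_rhs => rw [hBsplit]
    rw [Matrix.mul_add, Matrix.add_mul]
  have hBform : B = S * (1 + P) * S := by
    rw [hone, ← Matrix.mul_assoc, ← Matrix.mul_assoc,
      Matrix.mul_nonsing_inv _ hSu, Matrix.one_mul, Matrix.mul_assoc,
      Matrix.nonsing_inv_mul _ hSu, Matrix.mul_one]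
  have hdet : B.det = A.det * (1 + P).det := by
    rw [hBform, Matrix.det_mul, Matrix.det_mul]
    rw [← hSS, Matrix.det_mul]
    ring
  have him : A.det.im = 0 := det_im_zero hA
  have hre : B.det.re = A.det.re * (1 + P).det.re := by
    rw [hdet, Complex.mul_re, him]
    ring
  rw [hre]
  exact le_mul_of_one_le_right (det_re_pos hA).le (one_le_det_re_one_add hPpsd)

open scoped MatrixOrder in
lemma log_det_tangent {A B : Matrix m m ℂ} (hA : A.PosDef) (hB : B.PosDef) :
    Real.log A.det.re ≤ Real.log B.det.re + (B⁻¹ * A).trace.re - Fintype.card m := by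
  have hBu : IsUnit B.det := isUnit_iff_ne_zero.mpr hB.det_pos.ne'
  have hBinv : (B⁻¹).PosDef := hB.inv
  set T := CFC.sqrt B⁻¹ with hTdef
  have hTH : T.IsHermitian := (CFC.sqrt_nonneg B⁻¹).posSemidef.1
  have hTT : T * T = B⁻¹ := CFC.sqrt_mul_sqrt_self B⁻¹ hBinv.posSemidef.nonneg
  have hTu : IsUnit T.det := sqrt_isUnit_det hBinv
  have hM : (T * A * T).PosDef := posdef_conj hA hTH hTu
  have h1 := log_det_le hM
  have htr : (T * A * T).trace = (B⁻¹ * A).trace := by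
    rw [Matrix.trace_mul_cycle, hTT]
  have hdet : (T * A * T).det = B⁻¹.det * A.det := by
    rw [Matrix.det_mul, Matrix.det_mul, ← hTT, Matrix.det_mul]
    ring
  have hreinv : B⁻¹.det.re * B.det.re = 1 := by
    have h2 : B⁻¹.det * B.det = 1 := Matrix.det_nonsing_inv_mul_det _ hBu
    have := congrArg Complex.re h2
    rwa [Complex.mul_re, det_im_zero hB, mul_zero, sub_zero] at this
  have hBinvre : B⁻¹.det.re = (B.det.re)⁻¹ :=
    eq_inv_of_mul_eq_one_left hreinv
  have hMre : (T * A * T).det.re = B⁻¹.det.re * A.det.re := by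
    rw [hdet, Complex.mul_re, det_im_zero hBinv]
    ring
  rw [hMre, hBinvre] at h1
  rw [Real.log_mul (inv_ne_zero (det_re_pos hB).ne') (det_re_pos hA).ne', Real.log_inv] at h1
  rw [htr] at h1
  linarith



lemma intg_re {f : Ω → ℂ} (hf : Integrable f μ) :
    Integrable (fun ω => (f ω).re) μ := by simpa using hf.re

lemma intl_re {f : Ω → ℂ} (hf : Integrable f μ) :
    ∫ ω, (f ω).re ∂μ = (∫ ω, f ω ∂μ).re := by
  simpa using integral_re hf

lemma intl_im {f : Ω → ℂ} (hf : Integrable f μ) :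
    ∫ ω, (f ω).im ∂μ = (∫ ω, f ω ∂μ).im := by
  simpa using integral_im hf

lemma integrable_quadform {M : Ω → Matrix m m ℂ}
    (hInt : ∀ i j, Integrable (fun ω => M ω i j) μ) (x : m → ℂ) :
    Integrable (fun ω => dotProduct (star x) (M ω *ᵥ x)) μ := by
  have h : (fun ω => dotProduct (star x) (M ω *ᵥ x))
      = fun ω => ∑ i, ∑ j, (star x) i * (M ω i j * x j) := by
    funext ω; simp [dotProduct, Matrix.mulVec, Finset.mul_sum]
  rw [h]
  exact integrable_finset_sum _ fun i _ => integrable_finset_sum _ fun j _ =>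
    ((hInt i j).mul_const (x j)).const_mul _

lemma integral_quadform {M : Ω → Matrix m m ℂ}
    (hInt : ∀ i j, Integrable (fun ω => M ω i j) μ) {E : Matrix m m ℂ}
    (hE : ∀ i j, E i j = ∫ ω, M ω i j ∂μ) (x : m → ℂ) :
    dotProduct (star x) (E *ᵥ x) = ∫ ω, dotProduct (star x) (M ω *ᵥ x) ∂μ := by
  have h : ∀ (N : Matrix m m ℂ), dotProduct (star x) (N *ᵥ x)
      = ∑ i, ∑ j, (star x) i * (N i j * x j) := by
    intro N; simp [dotProduct, Matrix.mulVec, Finset.mul_sum]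
  rw [h]
  have h2 : ∀ ω, dotProduct (star x) (M ω *ᵥ x)
      = ∑ i, ∑ j, (star x) i * (M ω i j * x j) := fun ω => h (M ω)
  rw [integral_congr_ae (Filter.Eventually.of_forall h2)]
  rw [integral_finset_sum _ fun i _ => integrable_finset_sum _ fun j _ =>
    ((hInt i j).mul_const (x j)).const_mul _]
  refine Finset.sum_congr rfl fun i _ => ?_
  rw [integral_finset_sum _ fun j _ => ((hInt i j).mul_const (x j)).const_mul _]
  refine Finset.sum_congr rfl fun j _ => ?_
  calc (star x) i * (E i j * x j) = (star x) i * ((∫ ω, M ω i j ∂μ) * x j) := by rw [hE]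
    _ = ∫ ω, (star x) i * (M ω i j * x j) ∂μ := by
        rw [integral_const_mul, ← integral_mul_const]

lemma isHermitian_of_integral {M : Ω → Matrix m m ℂ}
    (hH : ∀ ω, (M ω).IsHermitian) {E : Matrix m m ℂ}
    (hE : ∀ i j, E i j = ∫ ω, M ω i j ∂μ) : E.IsHermitian := by
  ext i j
  rw [Matrix.conjTranspose_apply, hE j i, hE i j, Complex.star_def, ← integral_conj]
  refine integral_congr_ae (Filter.Eventually.of_forall fun ω => ?_)
  have := (hH ω).eq
  calc (starRingEnd ℂ) (M ω j i) = (M ω)ᴴ i j := rfl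
    _ = M ω i j := by rw [this]

lemma posSemidef_of_integral [IsProbabilityMeasure μ] {M : Ω → Matrix m m ℂ}
    (hpsd : ∀ ω, (M ω).PosSemidef)
    (hInt : ∀ i j, Integrable (fun ω => M ω i j) μ) {E : Matrix m m ℂ}
    (hE : ∀ i j, E i j = ∫ ω, M ω i j ∂μ) : E.PosSemidef := by
  refine Matrix.PosSemidef.of_dotProduct_mulVec_nonneg (isHermitian_of_integral (fun ω => (hpsd ω).1) hE) fun x => ?_
  rw [integral_quadform hInt hE x]
  rw [Complex.le_def]
  constructor
  · rw [← intl_re (integrable_quadform hInt x)]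
    refine integral_nonneg fun ω => ?_
    exact (Complex.le_def.mp ((hpsd ω).dotProduct_mulVec_nonneg x)).1
  · rw [← intl_im (integrable_quadform hInt x)]
    simp only [Complex.zero_im]
    rw [← integral_zero Ω ℝ (μ := μ)]
    refine integral_congr_ae (Filter.Eventually.of_forall fun ω => ?_)
    simpa using ((Complex.le_def.mp ((hpsd ω).dotProduct_mulVec_nonneg x)).2)

lemma posDef_of_integral [IsProbabilityMeasure μ] {M : Ω → Matrix m m ℂ}
    (hpd : ∀ ω, (M ω).PosDef)
    (hInt : ∀ i j, Integrable (fun ω => M ω i j) μ) {E : Matrix m m ℂ}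
    (hE : ∀ i j, E i j = ∫ ω, M ω i j ∂μ) : E.PosDef := by
  refine Matrix.PosDef.of_dotProduct_mulVec_pos (isHermitian_of_integral (fun ω => (hpd ω).1) hE) fun x hx => ?_
  rw [integral_quadform hInt hE x, Complex.lt_def]
  constructor
  · rw [Complex.zero_re, ← intl_re (integrable_quadform hInt x)]
    rw [integral_pos_iff_support_of_nonneg
      (fun ω => (Complex.le_def.mp ((hpd ω).posSemidef.dotProduct_mulVec_nonneg x)).1)
      (intg_re (integrable_quadform hInt x))]
    have hsupp : Function.support (fun ω => (dotProduct (star x) (M ω *ᵥ x)).re)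
        = Set.univ := by
      refine Set.eq_univ_of_forall fun ω => ?_
      exact ((Complex.lt_def.mp ((hpd ω).dotProduct_mulVec_pos hx)).1).ne'
    rw [hsupp]
    simp
  · rw [Complex.zero_im, ← intl_im (integrable_quadform hInt x)]
    rw [← integral_zero Ω ℝ (μ := μ)]
    refine integral_congr_ae (Filter.Eventually.of_forall fun ω => ?_)
    simpa using ((Complex.lt_def.mp ((hpd ω).dotProduct_mulVec_pos hx)).2)



lemma smul_posSemidef {c : ℝ} (hc : 0 ≤ c) {M : Matrix m m ℂ} (hM : M.PosSemidef) :
    ((c:ℂ) • M).PosSemidef := by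
  refine Matrix.PosSemidef.of_dotProduct_mulVec_nonneg ?_ ?_
  · show ((c:ℂ) • M)ᴴ = _
    rw [Matrix.conjTranspose_smul, hM.1.eq]
    congr 1
    simp [Complex.star_def, Complex.conj_ofReal]
  · intro x
    rw [Matrix.smul_mulVec, dotProduct_smul, smul_eq_mul]
    have h := Complex.le_def.mp (hM.dotProduct_mulVec_nonneg x)
    rw [Complex.le_def]
    simp only [Complex.zero_re, Complex.zero_im] at h ⊢
    constructor
    · rw [Complex.mul_re]
      simp only [Complex.ofReal_re, Complex.ofReal_im, zero_mul, sub_zero]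
      exact mul_nonneg hc h.1
    · rw [Complex.mul_im]
      simp [Complex.ofReal_re, Complex.ofReal_im, ← h.2]

lemma smul_posDef {c : ℝ} (hc : 0 < c) {M : Matrix m m ℂ} (hM : M.PosDef) :
    ((c:ℂ) • M).PosDef := by
  refine Matrix.PosDef.of_dotProduct_mulVec_pos (smul_posSemidef hc.le hM.posSemidef).1 fun x hx => ?_
  rw [Matrix.smul_mulVec, dotProduct_smul, smul_eq_mul]
  have h := Complex.lt_def.mp (hM.dotProduct_mulVec_pos hx)
  rw [Complex.lt_def]
  simp only [Complex.zero_re, Complex.zero_im] at h ⊢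
  constructor
  · rw [Complex.mul_re]
    simp only [Complex.ofReal_re, Complex.ofReal_im, zero_mul, sub_zero]
    exact mul_pos hc h.1
  · rw [Complex.mul_im]
    simp [Complex.ofReal_re, Complex.ofReal_im, ← h.2]

lemma inv_diff_posSemidef {Wm : Matrix m m ℂ} (hW : Wm.PosDef) {ρ : ℝ} (hρ : 0 < ρ) :
    ((ρ:ℂ)⁻¹ • Wm⁻¹ - (1 + (ρ:ℂ) • Wm)⁻¹).PosSemidef := by
  have hρc : (ρ:ℂ) ≠ 0 := Complex.ofReal_ne_zero.mpr hρ.ne'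
  have hA : ((ρ:ℂ) • Wm).PosDef := smul_posDef hρ hW
  have hB : (1 + (ρ:ℂ) • Wm).PosDef := Matrix.PosDef.one.add_posSemidef hA.posSemidef
  have hAu : IsUnit ((ρ:ℂ) • Wm).det := isUnit_iff_ne_zero.mpr hA.det_pos.ne'
  have hBu : IsUnit (1 + (ρ:ℂ) • Wm).det := isUnit_iff_ne_zero.mpr hB.det_pos.ne'
  have h1 : (ρ:ℂ)⁻¹ • Wm⁻¹ = ((ρ:ℂ) • Wm)⁻¹ := by
    refine (Matrix.inv_eq_left_inv ?_).symm
    rw [Matrix.smul_mul, Matrix.mul_smul, smul_smul, inv_mul_cancel₀ hρc,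
      Matrix.nonsing_inv_mul _ (isUnit_iff_ne_zero.mpr hW.det_pos.ne'), one_smul]
  set A := (ρ:ℂ) • Wm with hAdef
  set B := 1 + A with hBdef
  have h2 : A⁻¹ * (B - A) * B⁻¹ = A⁻¹ - B⁻¹ := by
    rw [Matrix.mul_sub, Matrix.nonsing_inv_mul _ hAu, Matrix.sub_mul, Matrix.one_mul,
      Matrix.mul_assoc, Matrix.mul_nonsing_inv _ hBu, Matrix.mul_one]
  have h3 : B - A = 1 := by rw [hBdef]; exact add_sub_cancel_right 1 A
  have h4 : A⁻¹ - B⁻¹ = (B * A)⁻¹ := by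
    rw [← h2, h3, Matrix.mul_one, ← Matrix.mul_inv_rev]
  have h5 : B * A = A + A * A := by rw [hBdef, Matrix.add_mul, Matrix.one_mul]
  have hAA : (A * A).PosSemidef := by
    have := Matrix.posSemidef_conjTranspose_mul_self A
    rwa [hA.1.eq] at this
  have h6 : (B * A).PosDef := by rw [h5]; exact hA.add_posSemidef hAA
  rw [h1, h4]
  exact h6.inv.posSemidef

lemma intg_re' {f : Ω → ℂ} (hf : Integrable f μ) :
    Integrable (fun ω => (f ω).re) μ := by simpa using hf.re

lemma trace_mul_re_eq (C N : Matrix m m ℂ) :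
    (C * N).trace.re = ∑ i, ∑ j, (C i j * N j i).re := by
  rw [Matrix.trace]
  simp only [Matrix.diag, Matrix.mul_apply]
  rw [Complex.re_sum]
  exact Finset.sum_congr rfl fun i _ => Complex.re_sum _ _

lemma integrable_trace_mul_re {C : Matrix m m ℂ} {M : Ω → Matrix m m ℂ}
    (hInt : ∀ i j, Integrable (fun ω => M ω i j) μ) :
    Integrable (fun ω => (C * M ω).trace.re) μ := by
  have h : (fun ω => (C * M ω).trace.re) = fun ω => ∑ i, ∑ j, (C i j * M ω j i).re := by
    funext ω; exact trace_mul_re_eq C (M ω)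
  rw [h]
  exact integrable_finset_sum _ fun i _ => integrable_finset_sum _ fun j _ =>
    intg_re' ((hInt j i).const_mul _)

lemma integral_trace_mul_re {C : Matrix m m ℂ} {M : Ω → Matrix m m ℂ}
    (hInt : ∀ i j, Integrable (fun ω => M ω i j) μ) {E : Matrix m m ℂ}
    (hE : ∀ i j, E i j = ∫ ω, M ω i j ∂μ) :
    ∫ ω, (C * M ω).trace.re ∂μ = (C * E).trace.re := by
  have h : (fun ω => (C * M ω).trace.re) = fun ω => ∑ i, ∑ j, (C i j * M ω j i).re := by
    funext ω; exact trace_mul_re_eq C (M ω)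
  rw [h, trace_mul_re_eq]
  refine (integral_finset_sum _ fun i _ => integrable_finset_sum _ fun j _ =>
      intg_re' ((hInt j i).const_mul _)).trans ?_
  refine Finset.sum_congr rfl fun i _ => ?_
  refine (integral_finset_sum _ fun j _ => intg_re' ((hInt j i).const_mul _)).trans ?_
  refine Finset.sum_congr rfl fun j _ => ?_
  have : ∫ ω, (C i j * M ω j i).re ∂μ = (C i j * ∫ ω, M ω j i ∂μ).re := by
    rw [← integral_const_mul]
    simpa using integral_re (((hInt j i).const_mul (C i j)))
  rw [this, hE]


end MimoAux

/-- MIMO gap bound: for a random Hermitian positive definite matrix `W` with finite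
`E[W]` and `E[W⁻¹]`, and `ρ ≥ 1`, the gap
`G = E[log₂ det(I+ρW)] + log₂ det E[(I+ρW)⁻¹]` satisfies
`G ≤ log₂ det((I + E[W]) E[W⁻¹])`. -/
theorem mimo_gap_bound {Ω : Type*} [MeasurableSpace Ω] (μ : Measure Ω) [IsProbabilityMeasure μ]
    {n : ℕ} (W : Ω → Matrix (Fin n) (Fin n) ℂ) (ρ : ℝ) (hρ : 1 ≤ ρ)
    (hPD : ∀ ω, (W ω).PosDef)
    (hIntW : ∀ i j, Integrable (fun ω => (W ω) i j) μ)
    (hIntWinv : ∀ i j, Integrable (fun ω => ((W ω)⁻¹) i j) μ)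
    (hIntinv : ∀ i j, Integrable (fun ω => ((1 + (ρ : ℂ) • W ω)⁻¹) i j) μ)
    (hIntlog : Integrable (fun ω => Real.logb 2 ((1 + (ρ : ℂ) • W ω).det.re)) μ)
    (EW EWinv Einv : Matrix (Fin n) (Fin n) ℂ)
    (hEW : ∀ i j, EW i j = ∫ ω, (W ω) i j ∂μ)
    (hEWinv : ∀ i j, EWinv i j = ∫ ω, ((W ω)⁻¹) i j ∂μ)
    (hEinv : ∀ i j, Einv i j = ∫ ω, ((1 + (ρ : ℂ) • W ω)⁻¹) i j ∂μ) :
    (∫ ω, Real.logb 2 ((1 + (ρ : ℂ) • W ω).det.re) ∂μ) + Real.logb 2 (Einv.det.re)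
      ≤ Real.logb 2 (((1 + EW) * EWinv).det.re) := by
  classical
  have hρ0 : (0:ℝ) < ρ := lt_of_lt_of_le one_pos hρ
  have hlog2pos : (0:ℝ) < Real.log 2 := Real.log_pos (by norm_num)
  have hlog2 : Real.log 2 ≠ 0 := hlog2pos.ne'
  have hAPD : ∀ ω, (1 + (ρ:ℂ) • W ω).PosDef := fun ω =>
    Matrix.PosDef.one.add_posSemidef (MimoAux.smul_posDef hρ0 (hPD ω)).posSemidef
  have hentry : ∀ ω (i j : Fin n), (1 + (ρ:ℂ) • W ω) i j
      = (1 : Matrix (Fin n) (Fin n) ℂ) i j + (ρ:ℂ) * W ω i j := by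
    intro ω i j; simp [Matrix.add_apply, Matrix.smul_apply, smul_eq_mul]
  have hIntA : ∀ i j, Integrable (fun ω => (1 + (ρ:ℂ) • W ω) i j) μ := by
    intro i j
    have h : (fun ω => (1 + (ρ:ℂ) • W ω) i j)
        = fun ω => (1 : Matrix (Fin n) (Fin n) ℂ) i j + (ρ:ℂ) * W ω i j := by
      funext ω; exact hentry ω i j
    rw [h]; exact (integrable_const _).add ((hIntW i j).const_mul _)
  have hEA : ∀ i j, (1 + (ρ:ℂ) • EW) i j = ∫ ω, (1 + (ρ:ℂ) • W ω) i j ∂μ := by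
    intro i j
    have h : (fun ω => (1 + (ρ:ℂ) • W ω) i j)
        = fun ω => (1 : Matrix (Fin n) (Fin n) ℂ) i j + (ρ:ℂ) * W ω i j := by
      funext ω; exact hentry ω i j
    rw [h, integral_add (integrable_const _) ((hIntW i j).const_mul _), integral_const,
      integral_const_mul]
    simp [Matrix.add_apply, Matrix.smul_apply, smul_eq_mul, hEW i j, measure_univ]
  have hEWpd : EW.PosDef := MimoAux.posDef_of_integral hPD hIntW hEW
  have hEWinvpd : EWinv.PosDef :=
    MimoAux.posDef_of_integral (fun ω => (hPD ω).inv) hIntWinv hEWinv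
  have hEinvpd : Einv.PosDef :=
    MimoAux.posDef_of_integral (fun ω => (hAPD ω).inv) hIntinv hEinv
  have hB1pd : (1 + (ρ:ℂ) • EW).PosDef := MimoAux.posDef_of_integral hAPD hIntA hEA
  have hB1u : IsUnit (1 + (ρ:ℂ) • EW).det := isUnit_iff_ne_zero.mpr hB1pd.det_pos.ne'
  have h1EWpd : (1 + EW).PosDef := Matrix.PosDef.one.add_posSemidef hEWpd.posSemidef
  -- Jensen step
  have hIntlogA : Integrable (fun ω => Real.log ((1 + (ρ:ℂ) • W ω).det.re)) μ := by
    have h : (fun ω => Real.log ((1 + (ρ:ℂ) • W ω).det.re))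
        = fun ω => Real.logb 2 ((1 + (ρ:ℂ) • W ω).det.re) * Real.log 2 := by
      funext ω; rw [Real.logb, div_mul_cancel₀ _ hlog2]
    rw [h]; exact hIntlog.mul_const _
  have hJ : ∫ ω, Real.log ((1 + (ρ:ℂ) • W ω).det.re) ∂μ
      ≤ Real.log (1 + (ρ:ℂ) • EW).det.re := by
    have hpt : ∀ ω, Real.log ((1 + (ρ:ℂ) • W ω).det.re)
        ≤ Real.log (1 + (ρ:ℂ) • EW).det.re
          + ((1 + (ρ:ℂ) • EW)⁻¹ * (1 + (ρ:ℂ) • W ω)).trace.re - (n:ℝ) := by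
      intro ω
      have := MimoAux.log_det_tangent (hAPD ω) hB1pd
      simpa [Fintype.card_fin] using this
    have hint2 : Integrable (fun ω => Real.log (1 + (ρ:ℂ) • EW).det.re
        + ((1 + (ρ:ℂ) • EW)⁻¹ * (1 + (ρ:ℂ) • W ω)).trace.re - (n:ℝ)) μ :=
      ((integrable_const _).add (MimoAux.integrable_trace_mul_re hIntA)).sub (integrable_const _)
    have hmono := integral_mono hIntlogA hint2 hpt
    have htr : ((1 + (ρ:ℂ) • EW)⁻¹ * (1 + (ρ:ℂ) • EW)).trace.re = (n:ℝ) := by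
      rw [Matrix.nonsing_inv_mul _ hB1u, Matrix.trace_one]
      simp
    have heq : (fun ω => Real.log (1 + (ρ:ℂ) • EW).det.re
        + ((1 + (ρ:ℂ) • EW)⁻¹ * (1 + (ρ:ℂ) • W ω)).trace.re - (n:ℝ))
        = fun ω => (Real.log (1 + (ρ:ℂ) • EW).det.re - (n:ℝ))
          + ((1 + (ρ:ℂ) • EW)⁻¹ * (1 + (ρ:ℂ) • W ω)).trace.re := by
      funext ω; ring
    have hval : ∫ ω, (Real.log (1 + (ρ:ℂ) • EW).det.re
        + ((1 + (ρ:ℂ) • EW)⁻¹ * (1 + (ρ:ℂ) • W ω)).trace.re - (n:ℝ)) ∂μ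
        = Real.log (1 + (ρ:ℂ) • EW).det.re := by
      rw [heq, integral_add (integrable_const _) (MimoAux.integrable_trace_mul_re hIntA),
        integral_const, MimoAux.integral_trace_mul_re hIntA hEA, htr]
      simp [measure_univ]
    rw [hval] at hmono
    exact hmono
  -- step 2 : Einv ≤ ρ⁻¹ • EWinv in Loewner order
  have hcast : ((ρ:ℂ))⁻¹ = ((ρ⁻¹:ℝ):ℂ) := by push_cast; ring
  have hsm : ((ρ:ℂ)⁻¹ • EWinv).PosDef := by
    rw [hcast]; exact MimoAux.smul_posDef (inv_pos.mpr hρ0) hEWinvpd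
  have hdiff : (((ρ:ℂ)⁻¹ • EWinv) - Einv).PosSemidef := by
    have hintf : ∀ i j, Integrable
        (fun ω => ((ρ:ℂ)⁻¹ • (W ω)⁻¹ - (1 + (ρ:ℂ) • W ω)⁻¹) i j) μ := by
      intro i j
      have h : (fun ω => ((ρ:ℂ)⁻¹ • (W ω)⁻¹ - (1 + (ρ:ℂ) • W ω)⁻¹) i j)
          = fun ω => (ρ:ℂ)⁻¹ * (W ω)⁻¹ i j - (1 + (ρ:ℂ) • W ω)⁻¹ i j := by
        funext ω; simp [Matrix.sub_apply, Matrix.smul_apply, smul_eq_mul]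
      rw [h]; exact ((hIntWinv i j).const_mul _).sub (hIntinv i j)
    refine MimoAux.posSemidef_of_integral
      (M := fun ω => (ρ:ℂ)⁻¹ • (W ω)⁻¹ - (1 + (ρ:ℂ) • W ω)⁻¹)
      (fun ω => MimoAux.inv_diff_posSemidef (hPD ω) hρ0) hintf ?_
    intro i j
    have h : (fun ω => ((ρ:ℂ)⁻¹ • (W ω)⁻¹ - (1 + (ρ:ℂ) • W ω)⁻¹) i j)
        = fun ω => (ρ:ℂ)⁻¹ * (W ω)⁻¹ i j - (1 + (ρ:ℂ) • W ω)⁻¹ i j := by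
      funext ω; simp [Matrix.sub_apply, Matrix.smul_apply, smul_eq_mul]
    rw [h, integral_sub ((hIntWinv i j).const_mul _) (hIntinv i j), integral_const_mul]
    simp [Matrix.sub_apply, Matrix.smul_apply, smul_eq_mul, hEWinv i j, hEinv i j]
  have h2 : Einv.det.re ≤ ((ρ:ℂ)⁻¹ • EWinv).det.re :=
    MimoAux.det_mono hEinvpd hsm.1 hdiff
  have hdet1 : ((ρ:ℂ)⁻¹ • EWinv).det.re = (ρ⁻¹)^n * EWinv.det.re := by
    rw [Matrix.det_smul, hcast, ← Complex.ofReal_pow, Complex.re_ofReal_mul]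
    simp [Fintype.card_fin]
  -- step 3 : 1 + ρ EW ≤ ρ (1 + EW)
  have hD2pd : ((ρ:ℂ) • (1 + EW)).PosDef := MimoAux.smul_posDef hρ0 h1EWpd
  have hdiff2 : (((ρ:ℂ) • (1 + EW)) - (1 + (ρ:ℂ) • EW)).PosSemidef := by
    have heq : ((ρ:ℂ) • (1 + EW)) - (1 + (ρ:ℂ) • EW)
        = ((ρ - 1 : ℝ) : ℂ) • (1 : Matrix (Fin n) (Fin n) ℂ) := by
      push_cast
      module
    rw [heq]; exact MimoAux.smul_posSemidef (sub_nonneg.mpr hρ) Matrix.PosSemidef.one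
  have h3 : (1 + (ρ:ℂ) • EW).det.re ≤ ρ^n * (1 + EW).det.re := by
    have h4 := MimoAux.det_mono hB1pd hD2pd.1 hdiff2
    rwa [Matrix.det_smul, ← Complex.ofReal_pow, Complex.re_ofReal_mul, Fintype.card_fin] at h4
  have hprod : ((1 + EW) * EWinv).det.re = (1 + EW).det.re * EWinv.det.re := by
    rw [Matrix.det_mul, Complex.mul_re, MimoAux.det_im_zero h1EWpd]
    ring
  -- positivity facts
  have pB1 := MimoAux.det_re_pos hB1pd
  have pEinv := MimoAux.det_re_pos hEinvpd
  have pEWinv := MimoAux.det_re_pos hEWinvpd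
  have p1EW := MimoAux.det_re_pos h1EWpd
  have pfac : (0:ℝ) < (ρ⁻¹)^n * EWinv.det.re :=
    mul_pos (pow_pos (inv_pos.mpr hρ0) n) pEWinv
  -- final product inequality
  have hcancel : ρ^n * (ρ⁻¹)^n = 1 := by
    rw [← mul_pow, mul_inv_cancel₀ hρ0.ne', one_pow]
  have hkey : (1 + (ρ:ℂ) • EW).det.re * ((ρ⁻¹)^n * EWinv.det.re)
      ≤ (1 + EW).det.re * EWinv.det.re := by
    calc (1 + (ρ:ℂ) • EW).det.re * ((ρ⁻¹)^n * EWinv.det.re)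
        ≤ (ρ^n * (1 + EW).det.re) * ((ρ⁻¹)^n * EWinv.det.re) :=
          mul_le_mul_of_nonneg_right h3 pfac.le
      _ = (ρ^n * (ρ⁻¹)^n) * ((1 + EW).det.re * EWinv.det.re) := by ring
      _ = (1 + EW).det.re * EWinv.det.re := by rw [hcancel, one_mul]
  -- combine
  have hfinal : (∫ ω, Real.log ((1 + (ρ:ℂ) • W ω).det.re) ∂μ) + Real.log Einv.det.re
      ≤ Real.log (((1 + EW) * EWinv).det.re) := by
    calc (∫ ω, Real.log ((1 + (ρ:ℂ) • W ω).det.re) ∂μ) + Real.log Einv.det.re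
        ≤ Real.log (1 + (ρ:ℂ) • EW).det.re + Real.log ((ρ⁻¹)^n * EWinv.det.re) := by
          refine add_le_add hJ ?_
          have : Einv.det.re ≤ (ρ⁻¹)^n * EWinv.det.re := hdet1 ▸ h2
          exact Real.log_le_log pEinv this
      _ = Real.log ((1 + (ρ:ℂ) • EW).det.re * ((ρ⁻¹)^n * EWinv.det.re)) :=
          (Real.log_mul pB1.ne' pfac.ne').symm
      _ ≤ Real.log ((1 + EW).det.re * EWinv.det.re) :=
          Real.log_le_log (mul_pos pB1 pfac) hkey
      _ = Real.log (((1 + EW) * EWinv).det.re) := by rw [hprod]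
  have hgoal : (fun ω => Real.logb 2 ((1 + (ρ:ℂ) • W ω).det.re))
      = fun ω => Real.log ((1 + (ρ:ℂ) • W ω).det.re) / Real.log 2 := rfl
  rw [hgoal, integral_div, Real.logb, Real.logb, ← add_div]
  exact div_le_div_of_nonneg_right hfinal hlog2pos.le
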